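/- Ising/Kramers–Wannier lattice fusion rule: let L ≥ 1 and let H be the complex vector space of functions (ZMod L → ZMod 2) → ℂ with standard basis |x⟩ indexed by spin configurations x : ZMod L → ZMod 2. Define D_f|x⟩ := |x + 1̄⟩ (adding 1 to every coordinate, the global spin flip), the translation T|x⟩ := |x'⟩ with x'_i := x_{i+1}, and the Kramers–Wannier operator D_σ|x⟩ := 2^{−L/2} · Σ_{x' : ZMod L → ZMod 2} (Π_{i∈ZMod L} (−1)^{(x_i + x_{i+1})·x'_i}) |x'⟩. Then D_f ∘ D_f = id, D_f ∘ D_σ = D_σ ∘ D_f = D_σ, and D_σ ∘ D_σ = T ∘ (id + D_f). -/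

import Mathlib

open scoped BigOperators

/-- The global spin flip `D_f |x⟩ = |x + 1̄⟩` on the Hilbert space
`H = (ZMod L → ZMod 2) → ℂ` of the periodic Ising chain, as a matrix in the
configuration basis. -/
noncomputable def DfMat (L : ℕ) [NeZero L] :
    Matrix (ZMod L → ZMod 2) (ZMod L → ZMod 2) ℂ :=
  Matrix.of fun x' x => if x' = fun i => x i + 1 then 1 else 0

/-- The lattice translation `T |x⟩ = |x'⟩` with `x'_i = x_{i+1}`. -/
noncomputable def TIsingMat (L : ℕ) [NeZero L] :
    Matrix (ZMod L → ZMod 2) (ZMod L → ZMod 2) ℂ :=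
  Matrix.of fun x' x => if x' = fun i => x (i + 1) then 1 else 0

/-- `(−1)^c` for `c : ZMod 2`: `1` if `c = 0` and `−1` if `c = 1`. -/
noncomputable def isingSign (c : ZMod 2) : ℂ := if c = 0 then 1 else -1

/-- The Kramers–Wannier duality operator
`D_σ |x⟩ = 2^{−L/2} ∑_{x'} (∏_i (−1)^{(x_i + x_{i+1})·x'_i}) |x'⟩`. -/
noncomputable def DsigmaMat (L : ℕ) [NeZero L] :
    Matrix (ZMod L → ZMod 2) (ZMod L → ZMod 2) ℂ :=
  Matrix.of fun x' x =>
    ((1 : ℂ) / (Real.sqrt 2 : ℂ)) ^ L *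
      ∏ i : ZMod L, isingSign ((x i + x (i + 1)) * x' i)

lemma isingSign_add (a b : ZMod 2) : isingSign (a + b) = isingSign a * isingSign b := by
  rcases (by decide : ∀ b : ZMod 2, b = 0 ∨ b = 1) a with rfl | rfl <;>
  rcases (by decide : ∀ b : ZMod 2, b = 0 ∨ b = 1) b with rfl | rfl <;>
    simp [isingSign, (by decide : (1 : ZMod 2) + 1 = 0)]
lemma prod_isingSign {ι : Type*} (s : Finset ι) (f : ι → ZMod 2) :
    ∏ i ∈ s, isingSign (f i) = isingSign (∑ i ∈ s, f i) := by
  induction s using Finset.cons_induction with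
  | empty => simp [isingSign]
  | cons a s ha ih => rw [Finset.prod_cons, Finset.sum_cons, isingSign_add, ih]
lemma sum_isingSign_mul (a : ZMod 2) :
    ∑ b : ZMod 2, isingSign (b * a) = if a = 0 then 2 else 0 := by
  have : ∀ f : ZMod 2 → ℂ, ∑ b : ZMod 2, f b = f 0 + f 1 := fun f => Fin.sum_univ_two f
  rcases (by decide : ∀ b : ZMod 2, b = 0 ∨ b = 1) a with rfl | rfl <;> rw [this] <;> simp [isingSign] <;> norm_num
lemma sum_shift {L : ℕ} [NeZero L] (f : ZMod L → ZMod 2) (c : ZMod L) :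
    ∑ i : ZMod L, f (i + c) = ∑ i : ZMod L, f i :=
  Fintype.sum_equiv (Equiv.addRight c) _ _ (fun _ => rfl)
lemma zmod_const {L : ℕ} [NeZero L] (d : ZMod L → ZMod 2)
    (h : ∀ i, d (i + 1) = d i) : ∀ i, d i = d 0 := by
  have key : ∀ n : ℕ, d (n : ZMod L) = d 0 := by
    intro n
    induction n with
    | zero => simp
    | succ n ih => rw [Nat.cast_succ, h, ih]
  intro i
  have := key i.val
  rwa [ZMod.natCast_rightInverse i] at this

lemma Dsigma_mul_Dsigma (L : ℕ) [NeZero L] :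
    DsigmaMat L * DsigmaMat L = TIsingMat L * (1 + DfMat L) := by
  have sqrt2 : ((Real.sqrt 2 : ℝ) : ℂ) * ((Real.sqrt 2 : ℝ) : ℂ) = 2 := by
    rw [← Complex.ofReal_mul, Real.mul_self_sqrt (by norm_num)]
    norm_num
  ext x'' x
  -- RHS entry
  have rhs : (TIsingMat L * (1 + DfMat L)) x'' x
      = (if x'' = fun i => x (i + 1) then (1:ℂ) else 0)
        + (if x'' = fun i => x (i + 1) + 1 then (1:ℂ) else 0) := by
    rw [mul_add, mul_one, Matrix.add_apply]
    congr 1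
    rw [Matrix.mul_apply, Finset.sum_eq_single (fun i => x i + 1)]
    · rw [DfMat, Matrix.of_apply, if_pos rfl, mul_one, TIsingMat, Matrix.of_apply]
    · intro y _ hy; simp [DfMat, hy]
    · simp
  rw [rhs, Matrix.mul_apply]
  -- the coefficient a i
  set a : ZMod L → ZMod 2 := fun i => x'' i + x'' (i - 1) + x i + x (i + 1) with ha
  -- Step A: rewrite each summand
  have stepA : ∀ y : ZMod L → ZMod 2,
      DsigmaMat L x'' y * DsigmaMat L y x
      = (((1:ℂ) / (Real.sqrt 2 : ℂ)) ^ L * ((1:ℂ) / (Real.sqrt 2 : ℂ)) ^ L)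
        * ∏ i : ZMod L, isingSign (y i * a i) := by
    intro y
    rw [DsigmaMat, Matrix.of_apply, Matrix.of_apply, mul_mul_mul_comm]
    congr 1
    rw [← Finset.prod_mul_distrib]
    have e1 : ∀ i : ZMod L,
        isingSign ((y i + y (i + 1)) * x'' i) * isingSign ((x i + x (i + 1)) * y i)
        = isingSign ((y i + y (i + 1)) * x'' i + (x i + x (i + 1)) * y i) :=
      fun i => (isingSign_add _ _).symm
    rw [Finset.prod_congr rfl fun i _ => e1 i, prod_isingSign, prod_isingSign]
    congr 1
    have expand : ∀ i : ZMod L,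
        (y i + y (i + 1)) * x'' i + (x i + x (i + 1)) * y i
        = y i * x'' i + y (i + 1) * x'' i + y i * (x i + x (i + 1)) := fun i => by ring
    rw [Finset.sum_congr rfl fun i _ => expand i]
    have shift : ∑ i : ZMod L, y (i + 1) * x'' i = ∑ i : ZMod L, y i * x'' (i - 1) := by
      have := sum_shift (fun i => y i * x'' (i - 1)) 1
      simpa [add_sub_cancel_right] using this
    rw [Finset.sum_add_distrib, Finset.sum_add_distrib, shift,
      ← Finset.sum_add_distrib, ← Finset.sum_add_distrib]
    refine Finset.sum_congr rfl fun i _ => ?_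
    rw [ha]; ring
  rw [Finset.sum_congr rfl fun y _ => stepA y, ← Finset.mul_sum]
  -- Step B: factorize the sum over y
  have stepB : ∑ y : ZMod L → ZMod 2, ∏ i : ZMod L, isingSign (y i * a i)
      = ∏ i : ZMod L, (if a i = 0 then (2:ℂ) else 0) := by
    rw [← Fintype.piFinset_univ,
      ← Finset.prod_univ_sum (fun _ : ZMod L => (Finset.univ : Finset (ZMod 2)))
        (fun i b => isingSign (b * a i))]
    exact Finset.prod_congr rfl fun i _ => sum_isingSign_mul (a i)
  rw [stepB]
  -- Step C+D
  have hcoef : (((1:ℂ) / (Real.sqrt 2 : ℂ)) ^ L * ((1:ℂ) / (Real.sqrt 2 : ℂ)) ^ L)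
      * (2:ℂ) ^ L = 1 := by
    rw [← mul_pow, ← mul_pow, div_mul_div_comm, one_mul, sqrt2]
    rw [div_mul_cancel₀] <;> norm_num
  have key : (∀ i, a i = 0) ↔
      (x'' = fun i => x (i + 1)) ∨ (x'' = fun i => x (i + 1) + 1) := by
    constructor
    · intro h
      set d : ZMod L → ZMod 2 := fun i => x'' i + x (i + 1) with hd
      have hstep : ∀ i, d (i + 1) = d i := by
        intro i
        have h1 := h (i + 1)
        rw [ha] at h1
        simp only [add_sub_cancel_right] at h1
        have : d (i + 1) + d i = 0 := by
          rw [hd]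
          calc x'' (i + 1) + x (i + 1 + 1) + (x'' i + x (i + 1))
              = x'' (i + 1) + x'' i + x (i + 1) + x (i + 1 + 1) := by ring
            _ = 0 := h1
        have h2 : ∀ u v : ZMod 2, u + v = 0 → u = v := by decide
        exact h2 _ _ this
      have hconst := zmod_const d hstep
      have h2 : ∀ u v : ZMod 2, u + v = 0 → u = v := by decide
      rcases (by decide : ∀ b : ZMod 2, b = 0 ∨ b = 1) (d 0) with h0 | h0
      · left
        funext i
        have : d i = 0 := (hconst i).trans h0
        exact h2 _ _ this
      · right
        funext i
        have hdi : d i = 1 := (hconst i).trans h0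
        simp only [hd] at hdi
        exact (by decide : ∀ u v : ZMod 2, u + v = 1 → u = v + 1) _ _ hdi
    · rintro (rfl | rfl) <;> intro i <;> rw [ha] <;> simp only [sub_add_cancel]
      · exact (by decide : ∀ u v : ZMod 2, u + v + v + u = 0) _ _
      · exact (by decide : ∀ u v : ZMod 2, u + 1 + (v + 1) + v + u = 0) _ _
  by_cases h1 : x'' = fun i => x (i + 1)
  · have hne : ¬ x'' = fun i => x (i + 1) + 1 := by
      intro h2
      have := congrFun (h1.symm.trans h2) 0
      simpa using this
    have hall : ∀ i, a i = 0 := key.mpr (Or.inl h1)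
    rw [Finset.prod_congr rfl fun i _ => if_pos (hall i), Finset.prod_const,
      Finset.card_univ, ZMod.card]
    rw [if_pos h1, if_neg hne, add_zero]
    exact hcoef
  · by_cases h2 : x'' = fun i => x (i + 1) + 1
    · have hall : ∀ i, a i = 0 := key.mpr (Or.inr h2)
      rw [Finset.prod_congr rfl fun i _ => if_pos (hall i), Finset.prod_const,
        Finset.card_univ, ZMod.card]
      rw [if_pos h2, if_neg h1, zero_add]
      exact hcoef
    · have hnall : ¬ ∀ i, a i = 0 := fun h => (key.mp h).elim h1 h2
      push_neg at hnall
      obtain ⟨i, hi⟩ := hnall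
      have hzero : (∏ j : ZMod L, if a j = 0 then (2:ℂ) else 0) = 0 :=
        Finset.prod_eq_zero (Finset.mem_univ i)
          (if_neg hi : (if a i = 0 then (2:ℂ) else 0) = 0)
      rw [hzero, mul_zero, if_neg h1, if_neg h2, add_zero]

lemma Df_mul_Df (L : ℕ) [NeZero L] : DfMat L * DfMat L = 1 := by
  ext x' x
  rw [Matrix.mul_apply]
  rw [Finset.sum_eq_single (fun i => x i + 1)]
  · have hx : (fun i => (x i + 1) + 1) = x := by
      funext i; simp [(by decide : ∀ a : ZMod 2, a + 1 + 1 = a)]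
    simp [DfMat, Matrix.one_apply, hx]
  · intro y _ hy
    simp [DfMat, hy]
  · simp

lemma Df_mul_Dsigma (L : ℕ) [NeZero L] : DfMat L * DsigmaMat L = DsigmaMat L := by
  ext x' x
  rw [Matrix.mul_apply]
  rw [Finset.sum_eq_single (fun i => x' i + 1)]
  · have h1 : x' = fun i => (x' i + 1) + 1 := by
      funext i; simp [(by decide : ∀ a : ZMod 2, a + 1 + 1 = a)]
    rw [DfMat, Matrix.of_apply, if_pos h1, one_mul]
    simp only [DsigmaMat, Matrix.of_apply]
    congr 1
    rw [prod_isingSign, prod_isingSign]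
    congr 1
    have hterm : ∀ i : ZMod L, (x i + x (i + 1)) * (x' i + 1)
        = (x i + x (i + 1)) * x' i + (x i + x (i + 1)) := fun i => by ring
    rw [Finset.sum_congr rfl fun i _ => hterm i, Finset.sum_add_distrib]
    have hz : ∑ i : ZMod L, (x i + x (i + 1)) = 0 := by
      rw [Finset.sum_add_distrib, sum_shift x 1, CharTwo.add_self_eq_zero]
    rw [hz, add_zero]
  · intro y _ hy
    have : x' ≠ fun i => y i + 1 := by
      intro h
      apply hy
      funext i
      have := congrFun h i
      simp [(by decide : ∀ a : ZMod 2, a + 1 + 1 = a), this]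
    simp [DfMat, this]
  · simp

lemma Dsigma_mul_Df (L : ℕ) [NeZero L] : DsigmaMat L * DfMat L = DsigmaMat L := by
  ext x' x
  rw [Matrix.mul_apply]
  rw [Finset.sum_eq_single (fun i => x i + 1)]
  · rw [DfMat, Matrix.of_apply, if_pos rfl, mul_one]
    simp only [DsigmaMat, Matrix.of_apply]
    congr 2
    funext i
    congr 1
    simp [add_add_add_comm, (by decide : (1 : ZMod 2) + 1 = 0)]
  · intro y _ hy
    simp [DfMat, hy]
  · simp

/-- **Ising/Kramers–Wannier lattice fusion rule**: `D_f ∘ D_f = id`,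
`D_f ∘ D_σ = D_σ ∘ D_f = D_σ`, and `D_σ ∘ D_σ = T ∘ (id + D_f)`. -/
theorem ising_lattice_fusion_rule (L : ℕ) [NeZero L] :
    ((DfMat L).mulVecLin ∘ₗ (DfMat L).mulVecLin = LinearMap.id) ∧
    ((DfMat L).mulVecLin ∘ₗ (DsigmaMat L).mulVecLin = (DsigmaMat L).mulVecLin) ∧
    ((DsigmaMat L).mulVecLin ∘ₗ (DfMat L).mulVecLin = (DsigmaMat L).mulVecLin) ∧
    ((DsigmaMat L).mulVecLin ∘ₗ (DsigmaMat L).mulVecLin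
      = (TIsingMat L).mulVecLin ∘ₗ (LinearMap.id + (DfMat L).mulVecLin)) := by
  refine ⟨?_, ?_, ?_, ?_⟩
  · rw [← Matrix.mulVecLin_mul, Df_mul_Df, Matrix.mulVecLin_one]
  · rw [← Matrix.mulVecLin_mul, Df_mul_Dsigma]
  · rw [← Matrix.mulVecLin_mul, Dsigma_mul_Df]
  · rw [← Matrix.mulVecLin_mul, Dsigma_mul_Dsigma, Matrix.mulVecLin_mul,
      Matrix.mulVecLin_add, Matrix.mulVecLin_one]
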